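/- Assume: consistency for a=1; conditional mean exchangeability over A in the trial for a=1 with trial positivity for a=1; mean transportability to the third population: E[Y¹|X=x,S=2]=E[Y¹|X=x,S=1] whenever P(X=x,S=2)>0 and P(X=x,S=1)>0; and positivity P(S=1|X=x)>0 for every x with P(X=x,S=2)>0. Then E[Y¹ | S=2] = γ*_{1,1} := Σ_x E[Y|X=x,S=1,A=1] · P(X=x | S=2), summing over x with P(X=x,S=2)>0. -/
import Mathlib


open Finset
open scoped Classical

noncomputable def pr {Ω : Type*} [Fintype Ω] (P : Ω → ℝ) (E : Ω → Prop) : ℝ :=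
  ∑ ω, if E ω then P ω else 0

noncomputable def cexp {Ω : Type*} [Fintype Ω] (P : Ω → ℝ) (Y : Ω → ℝ) (E : Ω → Prop) : ℝ :=
  (∑ ω, if E ω then Y ω * P ω else 0) / pr P E

noncomputable def cpr {Ω : Type*} [Fintype Ω] (P : Ω → ℝ) (E F : Ω → Prop) : ℝ :=
  pr P (fun ω => E ω ∧ F ω) / pr P F

lemma pr_nonneg' {Ω : Type*} [Fintype Ω] (P : Ω → ℝ) (hP : ∀ ω, 0 ≤ P ω) (E : Ω → Prop) :
    0 ≤ pr P E :=
  Finset.sum_nonneg fun ω _ => by by_cases h : E ω <;> simp [h, hP ω]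

lemma pr_congr' {Ω : Type*} [Fintype Ω] (P : Ω → ℝ) {E F : Ω → Prop} (h : ∀ ω, E ω ↔ F ω) :
    pr P E = pr P F :=
  Finset.sum_congr rfl fun ω _ => by simp [h ω]

lemma num_zero' {Ω : Type*} [Fintype Ω] (P : Ω → ℝ) (hP : ∀ ω, 0 ≤ P ω) (Y : Ω → ℝ)
    (E : Ω → Prop) (h : pr P E = 0) : (∑ ω, if E ω then Y ω * P ω else 0) = 0 := by
  apply Finset.sum_eq_zero
  intro ω _
  by_cases hE : E ω
  · have hPω : P ω = 0 := by
      have := (Finset.sum_eq_zero_iff_of_nonneg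
        (fun ω _ => by by_cases h' : E ω <;> simp [h', hP ω])).mp h ω (Finset.mem_univ ω)
      simpa [hE] using this
    simp [hE, hPω]
  · simp [hE]

theorem stmt14    {Ω 𝓧 : Type*} [Fintype Ω] [Fintype 𝓧]
    (P : Ω → ℝ) (hP : ∀ ω, 0 ≤ P ω) (hPsum : ∑ ω, P ω = 1)
    (X : Ω → 𝓧) (S : Ω → ℕ) (A : Ω → ℕ) (Y : Ω → ℝ)
    (Y1 : Ω → ℝ)
    (hS2 : 0 < pr P (fun ω => S ω = 2))
    (hcons : ∀ ω, A ω = 1 → Y1 ω = Y ω)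
    (hexch : ∀ x, 0 < pr P (fun ω => X ω = x ∧ S ω = 1) → cexp P Y1 (fun ω => X ω = x ∧ S ω = 1) = cexp P Y1 (fun ω => X ω = x ∧ S ω = 1 ∧ A ω = 1))
    (hpos : ∀ x, 0 < pr P (fun ω => X ω = x ∧ S ω = 1) → 0 < cpr P (fun ω => A ω = 1) (fun ω => X ω = x ∧ S ω = 1))
    (htrans : ∀ x, 0 < pr P (fun ω => X ω = x ∧ S ω = 2) → 0 < pr P (fun ω => X ω = x ∧ S ω = 1) → cexp P Y1 (fun ω => X ω = x ∧ S ω = 2) = cexp P Y1 (fun ω => X ω = x ∧ S ω = 1))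
    (hpos1x : ∀ x, 0 < pr P (fun ω => X ω = x ∧ S ω = 2) → 0 < cpr P (fun ω => S ω = 1) (fun ω => X ω = x))
    : cexp P Y1 (fun ω => S ω = 2) =
      ∑ x ∈ univ.filter (fun x => 0 < pr P (fun ω => X ω = x ∧ S ω = 2)),
        cexp P Y (fun ω => X ω = x ∧ S ω = 1 ∧ A ω = 1) * (pr P (fun ω => X ω = x ∧ S ω = 2) / pr P (fun ω => S ω = 2)) := by
  have hnum : ∀ x, 0 < pr P (fun ω => X ω = x ∧ S ω = 2) →
      cexp P Y1 (fun ω => X ω = x ∧ S ω = 2)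
        = cexp P Y (fun ω => X ω = x ∧ S ω = 1 ∧ A ω = 1) := by
    intro x hx2
    have h1 : 0 < pr P (fun ω => X ω = x ∧ S ω = 1) := by
      have hc := hpos1x x hx2
      rw [cpr] at hc
      have hnn : 0 ≤ pr P (fun ω => S ω = 1 ∧ X ω = x) := pr_nonneg' P hP _
      have hpos' : 0 < pr P (fun ω => S ω = 1 ∧ X ω = x) := by
        rcases lt_or_eq_of_le hnn with h | h
        · exact h
        · rw [← h] at hc; simp at hc
      calc 0 < pr P (fun ω => S ω = 1 ∧ X ω = x) := hpos'
        _ = pr P (fun ω => X ω = x ∧ S ω = 1) := pr_congr' P fun ω => and_comm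
    rw [htrans x hx2 h1, hexch x h1]
    unfold cexp
    congr 1
    apply Finset.sum_congr rfl
    intro ω _
    by_cases h : X ω = x ∧ S ω = 1 ∧ A ω = 1
    · simp [h, hcons ω h.2.2]
    · simp [h]
  have hrhs : ∀ x ∈ univ.filter (fun x => 0 < pr P (fun ω => X ω = x ∧ S ω = 2)),
      cexp P Y (fun ω => X ω = x ∧ S ω = 1 ∧ A ω = 1) *
          (pr P (fun ω => X ω = x ∧ S ω = 2) / pr P (fun ω => S ω = 2))
        = (∑ ω, if X ω = x ∧ S ω = 2 then Y1 ω * P ω else 0) / pr P (fun ω => S ω = 2) := by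
    intro x hx
    rw [Finset.mem_filter] at hx
    rw [← hnum x hx.2]
    unfold cexp
    rw [div_mul_div_comm, mul_comm _ (pr P fun ω => X ω = x ∧ S ω = 2),
      mul_div_mul_left _ _ hx.2.ne']
    congr 1
    exact Finset.sum_congr rfl fun ω _ => by by_cases h : X ω = x ∧ S ω = 2 <;> simp [h]
  rw [Finset.sum_congr rfl hrhs, ← Finset.sum_div]
  unfold cexp
  congr 1
  rw [Finset.sum_filter_of_ne]
  · rw [Finset.sum_comm]
    apply Finset.sum_congr rfl
    intro ω _
    by_cases hs : S ω = 2
    · simp [hs]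
    · simp [hs]
  · intro x _ hne
    by_contra hnotpos
    have h0 : pr P (fun ω => X ω = x ∧ S ω = 2) = 0 :=
      le_antisymm (not_lt.mp hnotpos) (pr_nonneg' P hP _)
    apply hne
    have h' := num_zero' P hP Y1 (fun ω => X ω = x ∧ S ω = 2) h0
    convert h' using 2
    simp
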